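/- Let X₁, X₂, … be a strictly stationary and ergodic sequence of real random variables with finite essential supremum γ and with P(X₁ = γ) = P(X₁ = γ − a) = 0 for a fixed a > 0. Let (kₙ) satisfy 1 ≤ kₙ ≤ n, kₙ/n → 1, and let (N(t), t ≥ 0) be nonnegative integer-valued random variables with N(t) → ∞ almost surely as t → ∞. Then K(k_{N(t)}, N(t), a)/N(t) = (1/N(t)) Σ_{i=1}^{N(t)} 1{X_{k_{N(t)}:N(t)} − a < X_i < X_{k_{N(t)}:N(t)}} converges almost surely to P(X₁ > γ − a) as t → ∞. -/

import Mathlib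

open MeasureTheory Filter Set
open scoped Topology ENNReal

noncomputable section

namespace BirkhoffAux

set_option linter.unusedSectionVars false

variable {α : Type*} [MeasurableSpace α] {T : α → α} {g : α → ℝ} {C : ℝ}

/-- Birkhoff sum. -/
def bS (T : α → α) (g : α → ℝ) (n : ℕ) (y : α) : ℝ := ∑ i ∈ Finset.range n, g (T^[i] y)

lemma bS_succ' (n : ℕ) (y : α) : bS T g (n + 1) y = g y + bS T g n (T y) := by
  rw [bS, Finset.sum_range_succ', add_comm]
  simp [bS, Function.iterate_succ_apply]

lemma bS_measurable (hT : Measurable T) (hg : Measurable g) (n : ℕ) :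
    Measurable (bS T g n) :=
  Finset.measurable_sum _ fun i _ => hg.comp (hT.iterate i)

lemma abs_bS_le (hC : ∀ y, |g y| ≤ C) (n : ℕ) (y : α) : |bS T g n y| ≤ n * C := by
  calc |bS T g n y| ≤ ∑ i ∈ Finset.range n, |g (T^[i] y)| := Finset.abs_sum_le_sum_abs _ _
    _ ≤ ∑ _i ∈ Finset.range n, C := Finset.sum_le_sum fun i _ => hC _
    _ = n * C := by simp [mul_comm]

/-- Running maximum `max (0, S₁, …, S_N)`. -/
def bM (T : α → α) (g : α → ℝ) : ℕ → α → ℝ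
  | 0 => fun _ => 0
  | N + 1 => fun y => max (bM T g N y) (bS T g (N + 1) y)

lemma bM_nonneg (N : ℕ) (y : α) : 0 ≤ bM T g N y := by
  induction N with
  | zero => simp [bM]
  | succ N ih => exact le_trans ih (le_max_left _ _)

lemma bM_mono (N : ℕ) (y : α) : bM T g N y ≤ bM T g (N + 1) y := le_max_left _ _

lemma bS_le_bM {n N : ℕ} (hn : n ≤ N) (y : α) : bS T g n y ≤ bM T g N y := by
  induction N with
  | zero =>
    interval_cases n
    simp [bS, bM]
  | succ N ih =>
    rcases Nat.lt_or_ge n (N + 1) with h | h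
    · exact le_trans (ih (Nat.lt_succ_iff.mp h)) (le_max_left _ _)
    · have : n = N + 1 := le_antisymm hn h
      subst this
      exact le_max_right _ _

lemma bM_eq_bS_of_pos {N : ℕ} {y : α} (h : 0 < bM T g N y) :
    ∃ n, 1 ≤ n ∧ n ≤ N ∧ bM T g N y = bS T g n y := by
  induction N with
  | zero => simp [bM] at h
  | succ N ih =>
    rcases max_cases (bM T g N y) (bS T g (N + 1) y) with ⟨h1, _⟩ | ⟨h1, _⟩
    · have hM : bM T g (N + 1) y = bM T g N y := h1
      rw [hM] at h ⊢
      obtain ⟨n, hn1, hn2, hn3⟩ := ih h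
      exact ⟨n, hn1, Nat.le_succ_of_le hn2, hn3⟩
    · exact ⟨N + 1, Nat.le_add_left _ _, le_refl _, h1⟩

lemma bM_measurable (hT : Measurable T) (hg : Measurable g) (N : ℕ) :
    Measurable (bM T g N) := by
  induction N with
  | zero => simpa [bM] using measurable_const
  | succ N ih => exact Measurable.max ih (bS_measurable hT hg (N + 1))

lemma abs_bM_le (hC : ∀ y, |g y| ≤ C) (hC0 : 0 ≤ C) (N : ℕ) (y : α) :
    |bM T g N y| ≤ N * C := by
  rw [abs_le]
  constructor
  · have : (0:ℝ) ≤ N * C := by positivity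
    linarith [bM_nonneg (T := T) (g := g) N y]
  · induction N with
    | zero => simp [bM]
    | succ N ih =>
      rw [bM]
      apply max_le
      · exact le_trans ih (by push_cast; nlinarith)
      · exact le_trans (le_abs_self _) (abs_bS_le hC _ _)

lemma integrable_of_bound (ν : Measure α) [IsFiniteMeasure ν] {h : α → ℝ} (hm : Measurable h)
    {D : ℝ} (hD : ∀ y, |h y| ≤ D) : Integrable h ν :=
  (integrable_const D).mono' hm.aestronglyMeasurable
    (ae_of_all _ fun y => by simpa [Real.norm_eq_abs] using hD y)

lemma maximal_erg (ν : Measure α) [IsProbabilityMeasure ν] (hT : MeasurePreserving T ν ν)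
    (hg : Measurable g) (hC : ∀ y, |g y| ≤ C) (hC0 : 0 ≤ C) :
    0 ≤ ∫ y in {y | ∃ n, 1 ≤ n ∧ 0 < bS T g n y}, g y ∂ν := by
  have hTm : Measurable T := hT.measurable
  set A : ℕ → Set α := fun N => {y | 0 < bM T g N y} with hA
  have hAmeas : ∀ N, MeasurableSet (A N) := fun N =>
    measurableSet_lt measurable_const (bM_measurable hTm hg N)
  have hAmono : Monotone A := monotone_nat_of_le_succ fun N y hy =>
    lt_of_lt_of_le hy (bM_mono N y)
  have hAunion : ⋃ N, A N = {y | ∃ n, 1 ≤ n ∧ 0 < bS T g n y} := by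
    ext y
    simp only [mem_iUnion, hA, mem_setOf_eq]
    constructor
    · rintro ⟨N, hN⟩
      obtain ⟨n, hn1, _, hn3⟩ := bM_eq_bS_of_pos hN
      exact ⟨n, hn1, hn3 ▸ hN⟩
    · rintro ⟨n, hn1, hn2⟩
      exact ⟨n, lt_of_lt_of_le hn2 (bS_le_bM le_rfl y)⟩
  have hgint : Integrable g ν := integrable_of_bound ν hg hC
  have hMint : ∀ N, Integrable (bM T g N) ν := fun N =>
    integrable_of_bound ν (bM_measurable hTm hg N) (abs_bM_le hC hC0 N)
  have hMTint : ∀ N, Integrable (fun y => bM T g N (T y)) ν := fun N =>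
    integrable_of_bound ν ((bM_measurable hTm hg N).comp hTm)
      (fun y => abs_bM_le hC hC0 N (T y))
  have key : ∀ N, 0 ≤ ∫ y in A N, g y ∂ν := by
    intro N
    have hpt : ∀ y ∈ A N, bM T g N y - bM T g N (T y) ≤ g y := by
      intro y hy
      obtain ⟨n, hn1, hn2, heq⟩ := bM_eq_bS_of_pos hy
      obtain ⟨m, rfl⟩ := Nat.exists_eq_add_of_le hn1
      have h1 : bS T g (1 + m) y = g y + bS T g m (T y) := by
        rw [add_comm 1 m]; exact bS_succ' m y
      have h2 : bS T g m (T y) ≤ bM T g N (T y) := bS_le_bM (by omega) (T y)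
      have := heq ▸ (h1 ▸ (show g y + bS T g m (T y) ≤ g y + bM T g N (T y) by linarith))
      linarith
    have hcompT : ∫ y, bM T g N (T y) ∂ν = ∫ y, bM T g N y ∂ν := by
      conv_rhs => rw [← hT.map_eq]
      rw [integral_map hTm.aemeasurable (bM_measurable hTm hg N).aestronglyMeasurable]
    have hcompl : ∫ y in (A N)ᶜ, bM T g N y ∂ν = 0 := by
      rw [setIntegral_congr_fun (hAmeas N).compl (g := fun _ => (0:ℝ))]
      · simp
      · intro y hy
        simp only [hA, mem_compl_iff, mem_setOf_eq, not_lt] at hy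
        exact le_antisymm hy (bM_nonneg N y)
    have hsplit : ∫ y in A N, bM T g N y ∂ν = ∫ y, bM T g N y ∂ν := by
      rw [← integral_add_compl (hAmeas N) (hMint N), hcompl, add_zero]
    have hsub : ∫ y in A N, (bM T g N y - bM T g N (T y)) ∂ν
        = ∫ y in A N, bM T g N y ∂ν - ∫ y in A N, bM T g N (T y) ∂ν :=
      integral_sub ((hMint N).integrableOn) ((hMTint N).integrableOn)
    have hle2 : ∫ y in A N, bM T g N (T y) ∂ν ≤ ∫ y, bM T g N (T y) ∂ν :=
      setIntegral_le_integral (hMTint N) (ae_of_all _ fun y => bM_nonneg N (T y))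
    have hmono := setIntegral_mono_on ((hMint N).sub (hMTint N)).integrableOn
      hgint.integrableOn (hAmeas N) hpt
    calc (0:ℝ) = ∫ y, bM T g N y ∂ν - ∫ y, bM T g N (T y) ∂ν := by rw [hcompT]; ring
      _ ≤ ∫ y in A N, bM T g N y ∂ν - ∫ y in A N, bM T g N (T y) ∂ν := by
          rw [hsplit]; linarith
      _ = ∫ y in A N, (bM T g N y - bM T g N (T y)) ∂ν := hsub.symm
      _ ≤ ∫ y in A N, g y ∂ν := hmono
  have htend := tendsto_setIntegral_of_monotone hAmeas hAmono
    (hgint.integrableOn (s := ⋃ N, A N))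
  rw [← hAunion]
  exact ge_of_tendsto' htend key

lemma birkhoff_upper (ν : Measure α) [IsProbabilityMeasure ν] {f : α → ℝ}
    (herg : Ergodic T ν) (hf : Measurable f) (hC : ∀ y, |f y| ≤ C) (hC0 : 0 ≤ C) :
    ∀ᵐ y ∂ν, ∀ ε > 0, ∀ᶠ n in atTop, bS T f n y / n < (∫ x, f x ∂ν) + ε := by
  have hTm : Measurable T := herg.toMeasurePreserving.measurable
  set m := ∫ x, f x ∂ν with hm
  have hfint : Integrable f ν := integrable_of_bound ν hf hC
  have habsm : |m| ≤ C := by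
    have h1 := norm_integral_le_of_norm_le_const (μ := ν) (f := f) (C := C)
      (ae_of_all _ fun y => by simpa [Real.norm_eq_abs] using hC y)
    simpa [Real.norm_eq_abs] using h1
  have habs_u : ∀ (n : ℕ) (y : α), |bS T f n y / n| ≤ C := by
    intro n y
    rcases Nat.eq_zero_or_pos n with rfl | hn
    · simp [hC0, bS]
    · rw [abs_div, abs_of_nonneg (by positivity : (0:ℝ) ≤ (n:ℝ)), div_le_iff₀ (by positivity)]
      calc |bS T f n y| ≤ n * C := abs_bS_le hC n y
        _ = C * n := mul_comm _ _
  have hBnull : ∀ j : ℕ, ν {y | ∃ q : ℚ, m + 1/(j+1) < (q:ℝ) ∧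
      ∀ N : ℕ, ∃ n, N ≤ n ∧ (q:ℝ) < bS T f n y / n} = 0 := by
    intro j
    set c : ℝ := m + 1/(j+1) with hc
    set B : Set α := {y | ∃ q : ℚ, c < (q:ℝ) ∧
      ∀ N : ℕ, ∃ n, N ≤ n ∧ (q:ℝ) < bS T f n y / n} with hB
    have hBeq : B = ⋃ (q : ℚ) (_ : c < (q:ℝ)), ⋂ (N : ℕ), ⋃ (n : ℕ) (_ : N ≤ n),
        {y | (q:ℝ) < bS T f n y / n} := by
      ext y
      simp [hB, mem_iUnion, mem_iInter, mem_setOf_eq]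
    have hBmeas : MeasurableSet B := by
      rw [hBeq]
      refine MeasurableSet.iUnion fun q => MeasurableSet.iUnion fun _ =>
        MeasurableSet.iInter fun N => MeasurableSet.iUnion fun n =>
        MeasurableSet.iUnion fun _ => ?_
      exact measurableSet_lt measurable_const ((bS_measurable hTm hf n).div_const _)
    have hBsub : B ⊆ T ⁻¹' B := by
      rintro y ⟨q, hq, hfreq⟩
      obtain ⟨q', hq'1, hq'2⟩ := exists_rat_btwn hq
      refine ⟨q', hq'1, fun N => ?_⟩
      have hqq' : (0:ℝ) < (q:ℝ) - q' := by linarith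
      obtain ⟨n₀, hn₀⟩ := exists_nat_gt ((2*C) / ((q:ℝ) - q'))
      obtain ⟨n, hn1, hn2⟩ := hfreq (max (N + 2) (n₀ + 1))
      have hnN : N + 2 ≤ n := le_trans (le_max_left _ _) hn1
      have hnn₀ : n₀ + 1 ≤ n := le_trans (le_max_right _ _) hn1
      have hnpos : (0:ℝ) < n := by exact_mod_cast (by omega : 0 < n)
      have hq'ge : (-C : ℝ) ≤ (q':ℝ) := by
        have h1 : -C ≤ m := by
          have := abs_le.mp habsm; linarith [this.1]
        have h0 : (0:ℝ) < 1/((j:ℝ)+1) := by positivity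
        rw [hc] at hq'1
        linarith
      have hSn : (q:ℝ) * n < bS T f n y := by
        rw [lt_div_iff₀ hnpos] at hn2; exact hn2
      have hgap : (2*C) < ((q:ℝ) - q') * n := by
        rw [div_lt_iff₀ hqq'] at hn₀
        calc (2*C) < (n₀:ℝ) * ((q:ℝ) - q') := hn₀
          _ ≤ (n:ℝ) * ((q:ℝ) - q') := by
              apply mul_le_mul_of_nonneg_right _ (le_of_lt hqq')
              exact_mod_cast Nat.le_of_succ_le hnn₀
          _ = ((q:ℝ) - q') * n := mul_comm _ _
      obtain ⟨p, rfl⟩ : ∃ p, n = p + 1 := ⟨n - 1, by omega⟩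
      have hppos : (0:ℝ) < (p:ℝ) := by
        have : 0 < p := by omega
        exact_mod_cast this
      refine ⟨p, by omega, ?_⟩
      rw [lt_div_iff₀ hppos]
      have hfy : f y ≤ C := le_trans (le_abs_self _) (hC y)
      have hsucc : bS T f p (T y) = bS T f (p+1) y - f y := by
        rw [bS_succ' p y]; ring
      rw [hsucc]
      push_cast at hSn hgap ⊢
      linarith
    rcases herg.ae_empty_or_univ_of_ae_le_preimage hBmeas.nullMeasurableSet
        hBsub.eventuallyLE with hemp | huniv
    · exact ae_eq_empty.mp hemp
    · exfalso
      set g : α → ℝ := B.indicator (fun y => f y - c) with hg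
      have hgmeas : Measurable g := (hf.sub measurable_const).indicator hBmeas
      have hgbound : ∀ y, |g y| ≤ C + |c| := by
        intro y
        rw [hg]
        by_cases hy : y ∈ B
        · rw [indicator_of_mem hy]
          calc |f y - c| ≤ |f y| + |c| := abs_sub _ _
            _ ≤ C + |c| := by linarith [hC y]
        · rw [indicator_of_notMem hy]
          simp [abs_nonneg, hC0]
          positivity
      have hiter : ∀ y ∈ B, ∀ i, T^[i] y ∈ B := by
        intro y hy i
        induction i with
        | zero => simpa using hy
        | succ i ih => rw [Function.iterate_succ_apply']; exact hBsub ih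
      have hSeq : ∀ y ∈ B, ∀ n, bS T g n y = bS T f n y - n * c := by
        intro y hy n
        rw [bS, bS]
        have : ∀ i ∈ Finset.range n, g (T^[i] y) = f (T^[i] y) - c := by
          intro i _
          rw [hg, indicator_of_mem (hiter y hy i)]
        rw [Finset.sum_congr rfl this, Finset.sum_sub_distrib]
        simp [mul_comm]
      set A : Set α := {y | ∃ n, 1 ≤ n ∧ 0 < bS T g n y} with hA
      have hBsubA : B ⊆ A := by
        rintro y hy
        obtain ⟨q, hq, hfreq⟩ := hy
        obtain ⟨n, hn1, hn2⟩ := hfreq 1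
        have hnpos : (0:ℝ) < n := by exact_mod_cast Nat.lt_of_lt_of_le Nat.zero_lt_one hn1
        refine ⟨n, hn1, ?_⟩
        rw [hSeq y (⟨q, hq, hfreq⟩) n]
        rw [lt_div_iff₀ hnpos] at hn2
        have : c * n < (q:ℝ) * n := by
          apply mul_lt_mul_of_pos_right hq hnpos
        nlinarith
      have hmax := maximal_erg ν herg.toMeasurePreserving hgmeas hgbound (by positivity)
      have hνB : ν B = 1 := by
        rw [measure_congr huniv]; simp
      have hAeq : A = ⋃ (n : ℕ) (_ : 1 ≤ n), {y | 0 < bS T g n y} := by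
        ext y
        simp [hA, mem_iUnion, mem_setOf_eq]
      have hAmeas : MeasurableSet A := by
        rw [hAeq]
        exact MeasurableSet.iUnion fun n => MeasurableSet.iUnion fun _ =>
          measurableSet_lt measurable_const (bS_measurable hTm hgmeas n)
      have hgint : Integrable g ν := integrable_of_bound ν hgmeas hgbound
      have hνA : ν Aᶜ = 0 := by
        have h1 : ν A = 1 := le_antisymm prob_le_one
          (hνB ▸ measure_mono hBsubA)
        rw [prob_compl_eq_one_sub hAmeas, h1, tsub_self]
      have hνBc : ν Bᶜ = 0 := by
        rw [prob_compl_eq_one_sub hBmeas, hνB, tsub_self]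
      have hIA : ∫ y in A, g y ∂ν = ∫ y, g y ∂ν := by
        rw [← integral_add_compl hAmeas hgint,
          Measure.restrict_eq_zero.mpr hνA, integral_zero_measure, add_zero]
      have hIB : ∫ y, g y ∂ν = m - c := by
        rw [hg, integral_indicator hBmeas]
        have hfc : Integrable (fun y => f y - c) ν := hfint.sub (integrable_const c)
        have : ∫ y in B, (f y - c) ∂ν = ∫ y, (f y - c) ∂ν := by
          rw [← integral_add_compl hBmeas hfc,
            Measure.restrict_eq_zero.mpr hνBc, integral_zero_measure, add_zero]
        rw [this, integral_sub hfint (integrable_const c), integral_const]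
        simp [hm]
      rw [hIA, hIB, hc] at hmax
      have h0 : (0:ℝ) < 1/(j+1) := by positivity
      linarith
  have hae : ∀ᵐ y ∂ν, ∀ j : ℕ, y ∉ {y | ∃ q : ℚ, m + 1/(j+1) < (q:ℝ) ∧
      ∀ N : ℕ, ∃ n, N ≤ n ∧ (q:ℝ) < bS T f n y / n} := by
    rw [ae_all_iff]
    intro j
    exact measure_eq_zero_iff_ae_notMem.mp (hBnull j)
  filter_upwards [hae] with y hy ε hε
  by_contra hcon
  rw [not_eventually] at hcon
  obtain ⟨j, hj⟩ := exists_nat_one_div_lt (half_pos hε)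
  obtain ⟨q, hq1, hq2⟩ := exists_rat_btwn
    (show m + 1/(j+1) < m + ε by push_cast; linarith)
  refine hy j ⟨q, by exact_mod_cast hq1, fun N => ?_⟩
  obtain ⟨n, hn1, hn2⟩ := (hcon.and_eventually (eventually_ge_atTop N)).exists
  push_neg at hn1
  exact ⟨n, hn2, lt_of_lt_of_le hq2 hn1⟩

lemma birkhoff_ae_tendsto (ν : Measure α) [IsProbabilityMeasure ν] {f : α → ℝ}
    (herg : Ergodic T ν) (hf : Measurable f) (hC : ∀ y, |f y| ≤ C) (hC0 : 0 ≤ C) :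
    ∀ᵐ y ∂ν, Tendsto (fun n => bS T f n y / n) atTop (𝓝 (∫ x, f x ∂ν)) := by
  have h2 := birkhoff_upper (f := fun x => - f x) ν herg hf.neg
    (fun y => by simpa using hC y) hC0
  filter_upwards [birkhoff_upper ν herg hf hC hC0, h2] with y hy1 hy2
  rw [Metric.tendsto_nhds]
  intro ε hε
  filter_upwards [hy1 ε hε, hy2 ε hε] with n h1 h2
  rw [Real.dist_eq, abs_sub_lt_iff]
  have hbsneg : bS T (fun x => - f x) n y = - bS T f n y := by
    simp [bS]
  rw [hbsneg, integral_neg, neg_div] at h2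
  constructor
  · linarith
  · linarith

end BirkhoffAux


/-- The shift map on real sequences. -/
def seqShift (y : ℕ → ℝ) : ℕ → ℝ := fun n => y (n + 1)

/-- The path map associating to each sample point the sequence of observations. -/
def path {Ω : Type*} (X : ℕ → Ω → ℝ) (ω : Ω) : ℕ → ℝ := fun n => X n ω

/-- The `k`-th smallest value (k counted from 1) among `x 0, …, x (n-1)`. -/
def ordStat (k n : ℕ) (x : ℕ → ℝ) : ℝ :=
  ((List.ofFn (fun i : Fin n => x i)).insertionSort (· ≤ ·)).getD (k - 1) 0

/-- Number of observations among `x 0, …, x (n-1)` in the left `a`-neighborhood of the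
`k`-th order statistic. -/
def nearCount (k n : ℕ) (a : ℝ) (x : ℕ → ℝ) : ℕ :=
  ((Finset.range n).filter
    (fun i => ordStat k n x - a < x i ∧ x i < ordStat k n x)).card

/-- Sum of observations among `x 0, …, x (n-1)` in the left `a`-neighborhood of the
`k`-th order statistic. -/
def nearSum (k n : ℕ) (a : ℝ) (x : ℕ → ℝ) : ℝ :=
  ∑ i ∈ Finset.range n,
    if ordStat k n x - a < x i ∧ x i < ordStat k n x then x i else 0

/-- The right endpoint `sup {x : P(X ≤ x) < 1}` of the support of `X`, as an extended real. -/
def rightEndpoint {Ω : Type*} [MeasurableSpace Ω] (μ : Measure Ω) (X : Ω → ℝ) : EReal :=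
  sSup ((fun r : ℝ => (r : EReal)) '' {r : ℝ | μ {ω | X ω ≤ r} < 1})

section OrdStatAux

lemma countP_ofFn {m : ℕ} (g : Fin m → ℝ) (p : ℝ → Bool) :
    (List.ofFn g).countP p = ∑ i : Fin m, if p (g i) then 1 else 0 := by
  induction m with
  | zero => simp
  | succ m ih =>
    rw [List.ofFn_succ, List.countP_cons, ih, Fin.sum_univ_succ]
    ring

lemma count_list_eq (n : ℕ) (x : ℕ → ℝ) (P : ℝ → Prop) [DecidablePred P] :
    (((List.ofFn (fun i : Fin n => x i)).insertionSort (· ≤ ·)).countP (fun v => decide (P v)))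
      = ((Finset.range n).filter (fun i => P (x i))).card := by
  rw [(List.perm_insertionSort (· ≤ ·) (List.ofFn (fun i : Fin n => x i))).countP_eq _, countP_ofFn]
  rw [Finset.card_filter]
  rw [← Fin.sum_univ_eq_sum_range (fun i => if P (x i) then 1 else 0) n]
  simp

lemma ordStat_mem {k n : ℕ} (x : ℕ → ℝ) (hk1 : 1 ≤ k) (hkn : k ≤ n) :
    ∃ i, i < n ∧ ordStat k n x = x i := by
  set l := (List.ofFn (fun i : Fin n => x i)).insertionSort (· ≤ ·) with hl
  have hlen : l.length = n := by
    rw [hl, (List.perm_insertionSort _ _).length_eq, List.length_ofFn]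
  have hlt : k - 1 < l.length := by omega
  have hmem : l.getD (k-1) 0 ∈ l := by
    rw [List.getD_eq_getElem _ _ hlt]
    exact List.getElem_mem _
  rw [(List.perm_insertionSort _ _).mem_iff, List.mem_ofFn] at hmem
  obtain ⟨i, hi⟩ := hmem
  exact ⟨i, i.2, hi.symm⟩

lemma lt_ordStat {k n : ℕ} {c : ℝ} (x : ℕ → ℝ) (hk1 : 1 ≤ k) (hkn : k ≤ n)
    (h : n - k < ((Finset.range n).filter (fun i => c < x i)).card) :
    c < ordStat k n x := by
  by_contra hcon
  push_neg at hcon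
  set l := (List.ofFn (fun i : Fin n => x i)).insertionSort (· ≤ ·) with hl
  have hlen : l.length = n := by
    rw [hl, (List.perm_insertionSort _ _).length_eq, List.length_ofFn]
  have hsorted : l.Pairwise (· ≤ ·) := List.pairwise_insertionSort _ _
  have hlt : k - 1 < l.length := by omega
  have hcnt : (((Finset.range n).filter (fun i => c < x i)).card : ℕ)
      = l.countP (fun v => decide (c < v)) := (count_list_eq n x _).symm
  -- bound countP by n - k
  have hbound : l.countP (fun v => decide (c < v)) ≤ n - k := by
    have h2 : l.countP (fun v => decide (c < v))
        = ∑ j : Fin l.length, if c < l.get j then 1 else 0 := by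
      conv_lhs => rw [← List.ofFn_get l]
      rw [countP_ofFn]
      simp
    rw [h2]
    have h3 : ∀ j : Fin l.length, (if c < l.get j then 1 else 0)
        ≤ (if k ≤ (j : ℕ) then 1 else 0) := by
      intro j
      by_cases hj : k ≤ (j : ℕ)
      · simp [hj]
        split <;> omega
      · have hjle : (j : ℕ) ≤ k - 1 := by omega
        have hle : l.get j ≤ l.get ⟨k-1, hlt⟩ :=
          hsorted.rel_get_of_le (Fin.le_def.mpr hjle)
        have hthis : ¬ c < l.get j := by
          have hOrd : ordStat k n x = l.getD (k-1) 0 := rfl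
          rw [hOrd, List.getD_eq_getElem _ _ hlt] at hcon
          push_neg
          calc l.get j ≤ l.get ⟨k-1, hlt⟩ := hle
            _ ≤ c := hcon
        rw [if_neg hthis, if_neg hj]
    calc (∑ j : Fin l.length, if c < l.get j then 1 else 0)
        ≤ ∑ j : Fin l.length, if k ≤ (j:ℕ) then 1 else 0 := Finset.sum_le_sum fun j _ => h3 j
      _ = ∑ j ∈ Finset.range l.length, if k ≤ j then 1 else 0 := by
          rw [← Fin.sum_univ_eq_sum_range (fun j => if k ≤ j then 1 else 0) l.length]
      _ = ((Finset.range l.length).filter (fun j => k ≤ j)).card := by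
          rw [Finset.card_filter]
      _ = (Finset.Ico k l.length).card := by
          congr 1
          ext j
          simp [Finset.mem_filter, Finset.mem_Ico, and_comm]
      _ = n - k := by rw [Nat.card_Ico, hlen]
  omega

end OrdStatAux

section Application

open BirkhoffAux

variable {Ω : Type*} [MeasurableSpace Ω]

lemma seqShift_iterate (i : ℕ) (y : ℕ → ℝ) (n : ℕ) : (seqShift^[i] y) n = y (n + i) := by
  induction i generalizing y with
  | zero => simp
  | succ i ih =>
    rw [Function.iterate_succ_apply, ih]
    show y (n + i + 1) = y (n + (i + 1))
    congr 1

lemma empirical (μ : Measure Ω) [IsProbabilityMeasure μ] (X : ℕ → Ω → ℝ)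
    (hX : ∀ n, Measurable (X n))
    (herg : Ergodic seqShift (Measure.map (path X) μ))
    {Q : ℝ → Prop} [DecidablePred Q] (hQ : MeasurableSet {v : ℝ | Q v}) :
    ∀ᵐ ω ∂μ, Tendsto (fun n => (((Finset.range n).filter (fun i => Q (X i ω))).card : ℝ) / n)
      atTop (𝓝 ((μ {ω' | Q (X 0 ω')}).toReal)) := by
  have hpm : Measurable (path X) := measurable_pi_lambda _ hX
  haveI : IsProbabilityMeasure (Measure.map (path X) μ) :=
    Measure.isProbabilityMeasure_map hpm.aemeasurable
  set S : Set (ℕ → ℝ) := {y | Q (y 0)} with hS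
  have hSmeas : MeasurableSet S := (measurable_pi_apply 0) hQ
  set f : (ℕ → ℝ) → ℝ := S.indicator (fun _ => 1) with hf
  have hfm : Measurable f := measurable_const.indicator hSmeas
  have hfb : ∀ y, |f y| ≤ 1 := fun y => by
    rw [hf]; by_cases h : y ∈ S <;> simp [h]
  have hint : ∫ y, f y ∂(Measure.map (path X) μ) = ((Measure.map (path X) μ) S).toReal := by
    rw [hf, integral_indicator hSmeas, setIntegral_const, smul_eq_mul, mul_one, measureReal_def]
  have hmeq : (Measure.map (path X) μ) S = μ {ω' | Q (X 0 ω')} := by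
    rw [Measure.map_apply hpm hSmeas]; rfl
  have hbk := birkhoff_ae_tendsto (Measure.map (path X) μ) herg hfm hfb zero_le_one
  rw [hint, hmeq] at hbk
  have hae := ae_of_ae_map hpm.aemeasurable hbk
  filter_upwards [hae] with ω hω
  have hEq : ∀ n, bS seqShift f n (path X ω)
      = (((Finset.range n).filter (fun i => Q (X i ω))).card : ℝ) := by
    intro n
    rw [bS, Finset.card_filter]
    push_cast
    refine Finset.sum_congr rfl fun i _ => ?_
    have h0 : (seqShift^[i] (path X ω)) 0 = X i ω := by
      rw [seqShift_iterate]
      show X (0 + i) ω = X i ω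
      rw [Nat.zero_add]
    rw [hf, indicator_apply]
    simp [hS, h0]
  simpa only [hEq] using hω

lemma marginal (μ : Measure Ω) [IsProbabilityMeasure μ] (X : ℕ → Ω → ℝ)
    (hX : ∀ n, Measurable (X n))
    (herg : Ergodic seqShift (Measure.map (path X) μ)) {s : Set ℝ}
    (hs : MeasurableSet s) (i : ℕ) :
    μ {ω | X i ω ∈ s} = μ {ω | X 0 ω ∈ s} := by
  have hpm : Measurable (path X) := measurable_pi_lambda _ hX
  have h0 : MeasurableSet {y : ℕ → ℝ | y 0 ∈ s} := (measurable_pi_apply 0) hs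
  have hi : MeasurableSet {y : ℕ → ℝ | y i ∈ s} := (measurable_pi_apply i) hs
  have h1 : μ {ω | X i ω ∈ s} = (Measure.map (path X) μ) {y | y i ∈ s} := by
    rw [Measure.map_apply hpm hi]; rfl
  have h2 : μ {ω | X 0 ω ∈ s} = (Measure.map (path X) μ) {y | y 0 ∈ s} := by
    rw [Measure.map_apply hpm h0]; rfl
  have h3 : (seqShift^[i]) ⁻¹' {y : ℕ → ℝ | y 0 ∈ s} = {y | y i ∈ s} := by
    ext y; simp [seqShift_iterate]
  have h4 := (herg.toMeasurePreserving.iterate i).measure_preimage h0.nullMeasurableSet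
  rw [h1, h2, ← h3 ,h4]

end Application

section Deterministic

lemma det_tendsto (x : ℕ → ℝ) (γ a β : ℝ) (ha : 0 < a) (p b : ℕ → ℝ)
    (hppos : ∀ j, 0 < p j)
    (hptend : Tendsto p atTop (𝓝 0))
    (hbtend : Tendsto b atTop (𝓝 β))
    (k : ℕ → ℕ) (hk : ∀ n, 1 ≤ n → 1 ≤ k n ∧ k n ≤ n)
    (hk1 : Tendsto (fun n => (k n : ℝ) / n) atTop (𝓝 1))
    (hxlt : ∀ i, x i < γ)
    (hgt : ∀ j : ℕ, Tendsto (fun n =>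
      (((Finset.range n).filter (fun i => γ - 1/(j+1) < x i)).card : ℝ) / n) atTop (𝓝 (p j)))
    (hle : ∀ j : ℕ, Tendsto (fun n =>
      (((Finset.range n).filter (fun i => x i ≤ γ - a - 1/(j+1))).card : ℝ) / n) atTop (𝓝 (b j)))
    (hlt : Tendsto (fun n =>
      (((Finset.range n).filter (fun i => x i < γ - a)).card : ℝ) / n) atTop (𝓝 β)) :
    Tendsto (fun n => (nearCount (k n) n a x : ℝ) / n) atTop (𝓝 (1 - β)) := by
  rw [Metric.tendsto_nhds]
  intro ε hε
  obtain ⟨j, hj1, hj2⟩ : ∃ j, p j < ε/8 ∧ β - ε/8 < b j := by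
    have e1 : ∀ᶠ j in atTop, p j < ε/8 := hptend.eventually_lt_const (by linarith)
    have e2 : ∀ᶠ j in atTop, β - ε/8 < b j := hbtend.eventually_const_lt (by linarith)
    exact (e1.and e2).exists
  have hδ : 0 < min (ε/8) (p j / 2) := lt_min (by linarith) (by linarith [hppos j])
  have ev1 := (Metric.tendsto_nhds.mp (hgt j)) _ hδ
  have ev2 := (Metric.tendsto_nhds.mp (hle j)) _ (show (0:ℝ) < ε/8 by linarith)
  have ev3 := (Metric.tendsto_nhds.mp hlt) _ (show (0:ℝ) < ε/8 by linarith)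
  have ev4 := (Metric.tendsto_nhds.mp hk1) _ (show (0:ℝ) < p j / 2 by linarith [hppos j])
  filter_upwards [ev1, ev2, ev3, ev4, eventually_ge_atTop 1] with n h1 h2 h3 h4 hn1
  rw [Real.dist_eq] at h1 h2 h3 h4 ⊢
  have hnpos : (0:ℝ) < n := by exact_mod_cast hn1
  obtain ⟨hkn1, hkn2⟩ := hk n hn1
  set c1 : ℝ := γ - 1/(j+1) with hc1
  set q := ordStat (k n) n x with hq
  set cg := ((Finset.range n).filter (fun i => c1 < x i)).card with hcg
  set cl := ((Finset.range n).filter (fun i => x i ≤ γ - a - 1/(j+1))).card with hcl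
  set ct := ((Finset.range n).filter (fun i => x i < γ - a)).card with hct
  -- step 1: q > c1
  have habs1 := abs_lt.mp h1
  have habs2 := abs_lt.mp h2
  have habs3 := abs_lt.mp h3
  have habs4 := abs_lt.mp h4
  have hmin1 := min_le_left (ε/8) (p j / 2)
  have hmin2 := min_le_right (ε/8) (p j / 2)
  have hcg_lt : (n : ℝ) - k n < cg := by
    have hsum : (cg:ℝ)/n + (k n:ℝ)/n > 1 := by linarith
    rw [← add_div, gt_iff_lt, lt_div_iff₀ hnpos, one_mul] at hsum
    linarith
  have hqc1 : c1 < q := by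
    rw [hq]
    apply lt_ordStat x hkn1 hkn2
    have hcast : ((n - k n : ℕ) : ℝ) < cg := by
      rw [Nat.cast_sub hkn2]; exact hcg_lt
    exact_mod_cast hcast
  have hqγ : q < γ := by
    obtain ⟨i, hi, hieq⟩ := ordStat_mem x hkn1 hkn2
    rw [hq, hieq]; exact hxlt i
  -- A and B
  set A := (Finset.range n).filter (fun i => x i < q) with hA
  set B := (Finset.range n).filter (fun i => x i ≤ q - a) with hB
  have hBA : B ⊆ A := by
    intro i hi
    rw [hB, Finset.mem_filter] at hi
    rw [hA, Finset.mem_filter]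
    exact ⟨hi.1, by linarith [hi.2]⟩
  have hnear : (nearCount (k n) n a x : ℝ) = (A.card : ℝ) - B.card := by
    rw [nearCount]
    have hset : (Finset.range n).filter
        (fun i => ordStat (k n) n x - a < x i ∧ x i < ordStat (k n) n x) = A \ B := by
      ext i
      rw [Finset.mem_sdiff, hA, hB, Finset.mem_filter, Finset.mem_filter, Finset.mem_filter, ← hq]
      constructor
      · rintro ⟨hr, hp1, hp2⟩
        exact ⟨⟨hr, hp2⟩, fun hcon => by linarith [hcon.2]⟩
      · rintro ⟨⟨hr, hp2⟩, hnot⟩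
        refine ⟨hr, ?_, hp2⟩
        by_contra hcon
        push_neg at hcon
        exact hnot ⟨hr, by linarith⟩
    rw [hset, Finset.card_sdiff_of_subset hBA, Nat.cast_sub (Finset.card_le_card hBA)]
  -- counting bounds (ℕ level)
  have hcg_le_n : cg ≤ n := by
    rw [hcg]; exact le_trans (Finset.card_filter_le _ _) (le_of_eq (Finset.card_range n))
  have hA_le_n : A.card ≤ n := by
    rw [hA]; exact le_trans (Finset.card_filter_le _ _) (le_of_eq (Finset.card_range n))
  have hAcompl : n - cg ≤ A.card := by
    have hsubc : (Finset.range n).filter (fun i => ¬ (c1 < x i)) ⊆ A := by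
      intro i hi
      rw [Finset.mem_filter, not_lt] at hi
      rw [hA, Finset.mem_filter]
      exact ⟨hi.1, lt_of_le_of_lt hi.2 hqc1⟩
    have hcardsum : cg + ((Finset.range n).filter (fun i => ¬ (c1 < x i))).card = n := by
      rw [hcg, Finset.card_filter_add_card_filter_not, Finset.card_range]
    have := Finset.card_le_card hsubc
    omega
  have hclB : cl ≤ B.card := by
    rw [hcl]
    apply Finset.card_le_card
    intro i hi
    rw [Finset.mem_filter] at hi
    rw [hB, Finset.mem_filter]
    refine ⟨hi.1, ?_⟩
    have heq1 : γ - a - 1/(j+1) = c1 - a := by rw [hc1]; ring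
    have h6 : x i ≤ c1 - a := heq1 ▸ hi.2
    linarith [hqc1]
  have hBct : B.card ≤ ct := by
    rw [hct]
    apply Finset.card_le_card
    intro i hi
    rw [hB, Finset.mem_filter] at hi
    rw [Finset.mem_filter]
    exact ⟨hi.1, by linarith [hi.2]⟩
  -- go to ℝ divided by n
  have hdivle : ∀ s t : ℕ, s ≤ t → (s:ℝ)/n ≤ (t:ℝ)/n := by
    intro s t h
    exact (div_le_div_iff_of_pos_right hnpos).mpr (by exact_mod_cast h)
  have hu1 : (A.card:ℝ)/n ≤ 1 := by
    rw [div_le_one hnpos]; exact_mod_cast hA_le_n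
  have hu2 : 1 - (cg:ℝ)/n ≤ (A.card:ℝ)/n := by
    have hc2 : ((n - cg : ℕ):ℝ)/n ≤ (A.card:ℝ)/n := hdivle _ _ hAcompl
    rw [Nat.cast_sub hcg_le_n, sub_div, div_self hnpos.ne'] at hc2
    exact hc2
  have hv1 : (cl:ℝ)/n ≤ (B.card:ℝ)/n := hdivle _ _ hclB
  have hv2 : (B.card:ℝ)/n ≤ (ct:ℝ)/n := hdivle _ _ hBct
  rw [hnear, sub_div, abs_lt]
  constructor
  · linarith [hmin1, hmin2, habs1.1, habs1.2, habs2.1, habs3.2, hj1, hj2, hu1, hu2, hv1, hv2]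
  · linarith [hmin1, hmin2, habs1.1, habs1.2, habs2.1, habs3.2, hj1, hj2, hu1, hu2, hv1, hv2]

end Deterministic

theorem stmt14 {Ω : Type*} [MeasurableSpace Ω] (μ : Measure Ω) [IsProbabilityMeasure μ]
    (X : ℕ → Ω → ℝ) (hX : ∀ n, Measurable (X n))
    (herg : Ergodic seqShift (Measure.map (path X) μ))
    (γ : ℝ) (hγ : rightEndpoint μ (X 0) = (γ : EReal))
    (a : ℝ) (ha : 0 < a)
    (h1 : μ {ω | X 0 ω = γ} = 0) (h2 : μ {ω | X 0 ω = γ - a} = 0)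
    (k : ℕ → ℕ) (hk : ∀ n, 1 ≤ n → 1 ≤ k n ∧ k n ≤ n)
    (hk1 : Tendsto (fun n => (k n : ℝ) / n) atTop (𝓝 1))
    (N : ℝ → Ω → ℕ) (hN : ∀ᵐ ω ∂μ, Tendsto (fun t => N t ω) atTop atTop) :
    ∀ᵐ ω ∂μ, Tendsto
      (fun t => (nearCount (k (N t ω)) (N t ω) a (path X ω) : ℝ) / (N t ω)) atTop
      (𝓝 ((μ {ω' | γ - a < X 0 ω'}).toReal)) := by
  have hpm : Measurable (path X) := measurable_pi_lambda _ hX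
  have hmle : ∀ c : ℝ, MeasurableSet {ω : Ω | X 0 ω ≤ c} := fun c => (hX 0) measurableSet_Iic
  have hle_one : ∀ r : ℝ, γ < r → μ {ω | X 0 ω ≤ r} = 1 := by
    intro r hr
    by_contra hne
    have hlt : μ {ω | X 0 ω ≤ r} < 1 := lt_of_le_of_ne prob_le_one hne
    have h2' : (r : EReal) ≤ rightEndpoint μ (X 0) := le_sSup ⟨r, hlt, rfl⟩
    rw [hγ] at h2'
    exact absurd (EReal.coe_le_coe_iff.mp h2') (not_le.mpr hr)
  have hgt_gamma : μ {ω | γ < X 0 ω} = 0 := by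
    have hsub : {ω | γ < X 0 ω} ⊆ ⋃ m : ℕ, {ω | X 0 ω ≤ γ + 1/(m+1)}ᶜ := by
      intro ω hω
      obtain ⟨m, hm⟩ := exists_nat_one_div_lt (sub_pos.mpr (show γ < X 0 ω from hω))
      refine mem_iUnion.mpr ⟨m, ?_⟩
      simp only [mem_compl_iff, mem_setOf_eq, not_le]
      linarith
    refine measure_mono_null hsub (measure_iUnion_null fun m => ?_)
    rw [prob_compl_eq_one_sub (hmle _), hle_one _ ?_, tsub_self]
    have : (0:ℝ) < 1/((m:ℝ)+1) := by positivity
    linarith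
  have hge_gamma : μ {ω | γ ≤ X 0 ω} = 0 := by
    have hsub : {ω | γ ≤ X 0 ω} ⊆ {ω | γ < X 0 ω} ∪ {ω | X 0 ω = γ} := by
      intro ω hω
      rcases lt_or_eq_of_le (show γ ≤ X 0 ω from hω) with h | h
      · exact Or.inl h
      · exact Or.inr h.symm
    exact measure_mono_null hsub (measure_union_null hgt_gamma h1)
  have hFlt1 : ∀ ε : ℝ, 0 < ε → 0 < μ {ω | γ - ε < X 0 ω} := by
    intro ε hε
    have hone : μ {ω | X 0 ω ≤ γ - ε} < 1 := by
      have hlt : ((γ - ε : ℝ) : EReal) < rightEndpoint μ (X 0) := by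
        rw [hγ]
        exact_mod_cast sub_lt_self γ hε
      rw [rightEndpoint] at hlt
      obtain ⟨e, he, hlt2⟩ := lt_sSup_iff.mp hlt
      obtain ⟨r, hr, rfl⟩ := he
      have hgr : γ - ε < r := EReal.coe_lt_coe_iff.mp hlt2
      exact lt_of_le_of_lt (measure_mono fun ω h => le_trans h (le_of_lt hgr)) hr
    have hco : {ω | γ - ε < X 0 ω} = {ω | X 0 ω ≤ γ - ε}ᶜ := by
      ext ω; simp [not_le]
    rw [hco, prob_compl_eq_one_sub (hmle _)]
    exact tsub_pos_of_lt hone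
  set β : ℝ := (μ {ω | X 0 ω < γ - a}).toReal with hβ
  set p : ℕ → ℝ := fun j => (μ {ω | γ - 1/(j+1) < X 0 ω}).toReal with hp
  set b : ℕ → ℝ := fun j => (μ {ω | X 0 ω ≤ γ - a - 1/(j+1)}).toReal with hb
  have hppos : ∀ j, 0 < p j := fun j =>
    ENNReal.toReal_pos (hFlt1 _ (by positivity)).ne' (measure_ne_top μ _)
  have hptend : Tendsto p atTop (𝓝 0) := by
    have hanti : Antitone (fun j : ℕ => {ω | γ - 1/(j+1) < X 0 ω}) := by
      intro j j' hjj ω hω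
      simp only [mem_setOf_eq] at *
      have hd : 1/((j':ℝ)+1) ≤ 1/((j:ℝ)+1) := by
        apply one_div_le_one_div_of_le (by positivity)
        have : (j:ℝ) ≤ j' := by exact_mod_cast hjj
        linarith
      linarith
    have hmeasj : ∀ j : ℕ, NullMeasurableSet {ω | γ - 1/(j+1) < X 0 ω} μ := fun j =>
      ((hX 0) measurableSet_Ioi).nullMeasurableSet
    have htend := tendsto_measure_iInter_atTop hmeasj hanti ⟨0, measure_ne_top μ _⟩
    have hint : ⋂ j : ℕ, {ω | γ - 1/(j+1) < X 0 ω} = {ω | γ ≤ X 0 ω} := by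
      ext ω
      simp only [mem_iInter, mem_setOf_eq]
      constructor
      · intro h
        by_contra hcon
        push_neg at hcon
        obtain ⟨m, hm⟩ := exists_nat_one_div_lt (sub_pos.mpr hcon)
        have := h m
        linarith
      · intro h m
        have : 0 < 1/((m:ℝ)+1) := by positivity
        linarith
    rw [hint, hge_gamma] at htend
    have hcomp := (ENNReal.tendsto_toReal (a := 0) (by simp)).comp htend
    simpa [hp, Function.comp_def] using hcomp
  have hbtend : Tendsto b atTop (𝓝 β) := by
    have hmono : Monotone (fun j : ℕ => {ω | X 0 ω ≤ γ - a - 1/(j+1)}) := by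
      intro j j' hjj ω hω
      simp only [mem_setOf_eq] at *
      have hd : 1/((j':ℝ)+1) ≤ 1/((j:ℝ)+1) := by
        apply one_div_le_one_div_of_le (by positivity)
        have : (j:ℝ) ≤ j' := by exact_mod_cast hjj
        linarith
      linarith
    have htend := tendsto_measure_iUnion_atTop (μ := μ) hmono
    have huni : ⋃ j : ℕ, {ω | X 0 ω ≤ γ - a - 1/(j+1)} = {ω | X 0 ω < γ - a} := by
      ext ω
      simp only [mem_iUnion, mem_setOf_eq]
      constructor
      · rintro ⟨m, hm⟩
        have : 0 < 1/((m:ℝ)+1) := by positivity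
        linarith
      · intro h
        obtain ⟨m, hm⟩ := exists_nat_one_div_lt (sub_pos.mpr h)
        exact ⟨m, by linarith⟩
    rw [huni] at htend
    have hcomp := (ENNReal.tendsto_toReal (measure_ne_top μ _)).comp htend
    simpa [hb, hβ, Function.comp_def] using hcomp
  have htarget : (μ {ω' | γ - a < X 0 ω'}).toReal = 1 - β := by
    have heq : μ {ω | X 0 ω ≤ γ - a} = μ {ω | X 0 ω < γ - a} := by
      apply le_antisymm
      · have hsub : {ω | X 0 ω ≤ γ - a} ⊆ {ω | X 0 ω < γ - a} ∪ {ω | X 0 ω = γ - a} := by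
          intro ω hω
          rcases lt_or_eq_of_le (show X 0 ω ≤ γ - a from hω) with h | h
          · exact Or.inl h
          · exact Or.inr h
        calc μ {ω | X 0 ω ≤ γ - a} ≤ μ ({ω | X 0 ω < γ - a} ∪ {ω | X 0 ω = γ - a}) :=
              measure_mono hsub
          _ ≤ μ {ω | X 0 ω < γ - a} + μ {ω | X 0 ω = γ - a} := measure_union_le _ _
          _ = μ {ω | X 0 ω < γ - a} := by rw [h2, add_zero]
      · exact measure_mono fun ω h => le_of_lt (show X 0 ω < γ - a from h)
    have hco : {ω' | γ - a < X 0 ω'} = {ω | X 0 ω ≤ γ - a}ᶜ := by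
      ext ω; simp [not_le]
    rw [hco, prob_compl_eq_one_sub (hmle _), heq,
      ENNReal.toReal_sub_of_le prob_le_one ENNReal.one_ne_top]
    simp [hβ]
  have hE1 : ∀ᵐ ω ∂μ, ∀ i, X i ω < γ := by
    rw [ae_all_iff]
    intro i
    have hm0 : μ {ω | X i ω ∈ Ici γ} = μ {ω | X 0 ω ∈ Ici γ} :=
      marginal μ X hX herg measurableSet_Ici i
    have hz : μ {ω | γ ≤ X i ω} = 0 := hm0.trans hge_gamma
    filter_upwards [measure_eq_zero_iff_ae_notMem.mp hz] with ω h
    exact not_le.mp h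
  have hemp_gt : ∀ᵐ ω ∂μ, ∀ j : ℕ, Tendsto (fun n => (((Finset.range n).filter
      (fun i => γ - 1/(j+1) < X i ω)).card : ℝ)/n) atTop (𝓝 (p j)) := by
    rw [ae_all_iff]
    intro j
    exact empirical μ X hX herg (Q := fun v => γ - 1/(j+1) < v) measurableSet_Ioi
  have hemp_le : ∀ᵐ ω ∂μ, ∀ j : ℕ, Tendsto (fun n => (((Finset.range n).filter
      (fun i => X i ω ≤ γ - a - 1/(j+1))).card : ℝ)/n) atTop (𝓝 (b j)) := by
    rw [ae_all_iff]
    intro j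
    exact empirical μ X hX herg (Q := fun v => v ≤ γ - a - 1/(j+1)) measurableSet_Iic
  have hemp_lt : ∀ᵐ ω ∂μ, Tendsto (fun n => (((Finset.range n).filter
      (fun i => X i ω < γ - a)).card : ℝ)/n) atTop (𝓝 β) :=
    empirical μ X hX herg (Q := fun v => v < γ - a) measurableSet_Iio
  rw [show (μ {ω' | γ - a < X 0 ω'}).toReal = 1 - β from htarget]
  filter_upwards [hE1, hemp_gt, hemp_le, hemp_lt, hN] with ω hw1 hw2 hw3 hw4 hw5
  have hdet : Tendsto (fun n => (nearCount (k n) n a (path X ω) : ℝ) / n) atTop (𝓝 (1 - β)) :=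
    det_tendsto (path X ω) γ a β ha p b hppos hptend hbtend k hk hk1 hw1 hw2 hw3 hw4
  exact hdet.comp hw5
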